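/- If F is a minimal point-separating set of continuous real-valued functions on X, then the closure of F in C_p(X) is a minimal closed separating function set: it is closed, point-separating, and contains no proper closed point-separating subset. -/
import Mathlib


/-- `C_p(X)`: continuous real-valued functions on `X` with the topology of pointwise
convergence (the subspace topology from the product `X → ℝ`). -/
def Cp (X : Type*) [TopologicalSpace X] : Type _ := {f : X → ℝ // Continuous f}

instance (X : Type*) [TopologicalSpace X] : TopologicalSpace (Cp X) :=
  instTopologicalSpaceSubtype

def SepFun {X : Type*} [TopologicalSpace X] (F : Set (Cp X)) : Prop :=
  ∀ x y : X, x ≠ y → ∃ f ∈ F, f.1 x ≠ f.1 y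

def MinSepFun {X : Type*} [TopologicalSpace X] (F : Set (Cp X)) : Prop :=
  SepFun F ∧ ∀ G ⊂ F, ¬ SepFun G

instance CpT2 (X : Type*) [TopologicalSpace X] : T2Space (Cp X) := by
  unfold Cp; infer_instance

lemma eval_cont {X : Type*} [TopologicalSpace X] (x : X) :
    Continuous (fun f : Cp X => f.1 x) :=
  (continuous_apply x).comp continuous_subtype_val

/-- The closure in `C_p(X)` of a minimal point-separating set is a minimal closed
separating set: it is closed, point-separating, and has no proper closed
separating subset. -/
theorem stmt15 {X : Type*} [TopologicalSpace X] (F : Set (Cp X)) (hF : MinSepFun F) :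
    IsClosed (closure F) ∧ SepFun (closure F) ∧
      ∀ G ⊂ closure F, IsClosed G → ¬ SepFun G := by
  refine ⟨isClosed_closure, ?_, ?_⟩
  · intro x y hxy
    obtain ⟨f, hf, h⟩ := hF.1 x y hxy
    exact ⟨f, subset_closure hf, h⟩
  · intro G hG hGc hGs
    have hFG : F ⊆ G := by
      intro f₀ hf₀
      by_contra hne
      refine hF.2 (F \ {f₀}) ⟨Set.diff_subset, ?_⟩ ?_
      · intro h
        exact (h hf₀).2 rfl
      · intro x y hxy
        obtain ⟨g, hgG, hgxy⟩ := hGs x y hxy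
        have hgF : g ∈ closure F := hG.1 hgG
        have hgne : g ≠ f₀ := fun h => hne (h ▸ hgG)
        have hU : IsOpen {f : Cp X | f.1 x ≠ f.1 y ∧ f ≠ f₀} := by
          refine IsOpen.inter ?_ (isOpen_ne)
          exact isOpen_ne_fun (eval_cont x) (eval_cont y)
        obtain ⟨f, ⟨hfxy, hfne⟩, hfF⟩ :=
          (mem_closure_iff.mp hgF) _ hU ⟨hgxy, hgne⟩
        exact ⟨f, ⟨hfF, hfne⟩, hfxy⟩
    exact hG.2 (closure_minimal hFG hGc)
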